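/- Let W be an increasing filtration of a finite-dimensional complex vector space V. Then the set Y(W) of all gradings of W is nonempty, and the nilpotent group exp(Lie₋₁), where Lie₋₁ = {α ∈ End(V) : α(W_k) ⊆ W_{k-1} for all k}, acts transitively on Y(W). -/

import Mathlib

variable {V : Type*} [AddCommGroup V] [Module ℂ V]

def IsGrading (Y : Module.End ℂ V) (W : ℤ → Submodule ℂ V) : Prop :=
  ∀ k : ℤ, W k = Module.End.eigenspace Y (k : ℂ) ⊔ W (k - 1) ∧
    Module.End.eigenspace Y (k : ℂ) ⊓ W (k - 1) = ⊥

/-- The exponential of a (nilpotent) endomorphism, as a finite sum. -/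
noncomputable def expNil (α : Module.End ℂ V) : Module.End ℂ V :=
  ∑ i ∈ Finset.range (Module.finrank ℂ V + 1), ((i.factorial : ℂ))⁻¹ • α ^ i

open Polynomial Finset Module

set_option linter.unusedVariables false
set_option linter.unusedSectionVars false
set_option maxHeartbeats 1000000

noncomputable def expPoly (n : ℕ) : ℂ[X] :=
  ∑ i ∈ Finset.range n, Polynomial.C ((i.factorial : ℂ))⁻¹ * X ^ i

noncomputable def expPolyNeg (n : ℕ) : ℂ[X] :=
  ∑ i ∈ Finset.range n, Polynomial.C ((-1) ^ i * (i.factorial : ℂ)⁻¹) * X ^ i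

lemma aeval_CX (α : Module.End ℂ V) (c : ℂ) (i : ℕ) :
    Polynomial.aeval α (Polynomial.C c * X ^ i) = c • α ^ i := by
  simp [Algebra.smul_def]

lemma expNil_eq_aeval [FiniteDimensional ℂ V] (α : Module.End ℂ V) :
    expNil α = Polynomial.aeval α (expPoly (Module.finrank ℂ V + 1)) := by
  rw [expPoly, map_sum, expNil]
  exact Finset.sum_congr rfl fun i _ => (aeval_CX α _ i).symm

lemma expNil_neg_eq_aeval [FiniteDimensional ℂ V] (α : Module.End ℂ V) :
    expNil (-α) = Polynomial.aeval α (expPolyNeg (Module.finrank ℂ V + 1)) := by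
  rw [expPolyNeg, map_sum, expNil]
  refine Finset.sum_congr rfl fun i _ => ?_
  rw [aeval_CX, ← neg_one_smul ℂ α, _root_.smul_pow, smul_smul, mul_comm]

lemma coeff_expPoly (n i : ℕ) : (expPoly n).coeff i =
    if i < n then ((i.factorial : ℂ))⁻¹ else 0 := by
  rw [expPoly, finset_sum_coeff]
  simp only [coeff_C_mul, coeff_X_pow]
  simp [Finset.sum_ite_eq' (Finset.range n), Finset.mem_range]

lemma coeff_expPolyNeg (n i : ℕ) : (expPolyNeg n).coeff i =
    if i < n then (-1) ^ i * ((i.factorial : ℂ))⁻¹ else 0 := by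
  rw [expPolyNeg, finset_sum_coeff]
  simp only [coeff_C_mul, coeff_X_pow]
  simp [Finset.sum_ite_eq' (Finset.range n), Finset.mem_range]

lemma alt_sum_complex (m : ℕ) (hm : m ≠ 0) :
    ∑ k ∈ Finset.range (m + 1), (-1 : ℂ) ^ k * (m.choose k) = 0 := by
  have h := Int.alternating_sum_range_choose_of_ne hm
  have h2 : ((∑ i ∈ Finset.range (m + 1), (-1 : ℤ) ^ i * (m.choose i) : ℤ) : ℂ) = 0 := by
    rw [h]; simp
  push_cast at h2; exact h2

lemma key_coeff (m : ℕ) (hm : m ≠ 0) :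
    ∑ ij ∈ Finset.HasAntidiagonal.antidiagonal m,
      ((ij.1.factorial : ℂ))⁻¹ * ((-1) ^ ij.2 * (ij.2.factorial : ℂ)⁻¹) = 0 := by
  rw [Finset.Nat.sum_antidiagonal_eq_sum_range_succ_mk]
  have h : ∀ k ∈ Finset.range (m + 1),
      ((k.factorial : ℂ))⁻¹ * ((-1) ^ (m - k) * (((m - k).factorial : ℂ))⁻¹)
      = ((m.factorial : ℂ))⁻¹ * (-1) ^ m * ((-1) ^ k * (m.choose k)) := by
    intro k hk
    rw [Finset.mem_range, Nat.lt_succ_iff] at hk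
    have h1 : ((m.choose k : ℂ)) * k.factorial * (m - k).factorial = m.factorial := by
      exact_mod_cast congrArg (Nat.cast (R := ℂ)) (Nat.choose_mul_factorial_mul_factorial hk)
    have hsq : (-1 : ℂ) ^ k * (-1) ^ k = 1 := by rw [← mul_pow]; norm_num
    have h2 : (-1 : ℂ) ^ (m - k) = (-1) ^ m * (-1) ^ k := by
      have : (-1 : ℂ) ^ (m - k) * (-1) ^ k = (-1) ^ m := by
        rw [← pow_add]; congr 1; omega
      calc (-1 : ℂ) ^ (m - k) = (-1 : ℂ) ^ (m - k) * ((-1) ^ k * (-1) ^ k) := by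
            rw [hsq, mul_one]
        _ = ((-1 : ℂ) ^ (m - k) * (-1) ^ k) * (-1) ^ k := by ring
        _ = (-1) ^ m * (-1) ^ k := by rw [this]
    have hk0 : (k.factorial : ℂ) ≠ 0 := Nat.cast_ne_zero.mpr k.factorial_ne_zero
    have hmk0 : (((m - k).factorial : ℂ)) ≠ 0 := Nat.cast_ne_zero.mpr (m - k).factorial_ne_zero
    have hm0 : (m.factorial : ℂ) ≠ 0 := Nat.cast_ne_zero.mpr m.factorial_ne_zero
    have h3 : ((k.factorial : ℂ))⁻¹ * (((m - k).factorial : ℂ))⁻¹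
        = ((m.factorial : ℂ))⁻¹ * (m.choose k) := by
      field_simp
      linear_combination (-1 : ℂ) * h1
    rw [h2]
    linear_combination ((-1 : ℂ) ^ m * (-1) ^ k) * h3
  rw [Finset.sum_congr rfl h]
  simp_rw [mul_assoc, ← Finset.mul_sum]
  rw [alt_sum_complex m hm, mul_zero, mul_zero]

lemma X_pow_dvd_expPoly_mul (n : ℕ) (hn : n ≠ 0) :
    (X : ℂ[X]) ^ n ∣ expPoly n * expPolyNeg n - 1 := by
  rw [X_pow_dvd_iff]
  intro d hd
  rw [coeff_sub, coeff_mul, coeff_one]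
  rcases eq_or_ne d 0 with rfl | hd0
  · simp [coeff_expPoly, coeff_expPolyNeg, Nat.pos_of_ne_zero hn]
  · rw [if_neg hd0, sub_zero]
    have h : ∀ ij ∈ Finset.HasAntidiagonal.antidiagonal d, (expPoly n).coeff ij.1 * (expPolyNeg n).coeff ij.2
        = ((ij.1.factorial : ℂ))⁻¹ * ((-1) ^ ij.2 * ((ij.2.factorial : ℂ))⁻¹) := by
      intro ij hij
      rw [Finset.HasAntidiagonal.mem_antidiagonal] at hij
      rw [coeff_expPoly, coeff_expPolyNeg, if_pos, if_pos] <;> omega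
    rw [Finset.sum_congr rfl h, key_coeff d hd0]

lemma expNil_mul_expNil_neg [FiniteDimensional ℂ V] (α : Module.End ℂ V)
    (h : α ^ (Module.finrank ℂ V + 1) = 0) : expNil α * expNil (-α) = 1 := by
  obtain ⟨s, hs⟩ := X_pow_dvd_expPoly_mul (Module.finrank ℂ V + 1) (Nat.succ_ne_zero _)
  rw [expNil_eq_aeval, expNil_neg_eq_aeval, ← map_mul]
  have h2 : expPoly (Module.finrank ℂ V + 1) * expPolyNeg (Module.finrank ℂ V + 1)
      = 1 + X ^ (Module.finrank ℂ V + 1) * s := by rw [← hs]; ring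
  rw [h2, map_add, map_one, map_mul, map_pow, aeval_X, h, zero_mul, add_zero]

def LieD (W : ℤ → Submodule ℂ V) (d : ℕ) (f : Module.End ℂ V) : Prop :=
  ∀ k : ℤ, ∀ v ∈ W k, f v ∈ W (k - d)

namespace LieD

variable {W : ℤ → Submodule ℂ V} {d e : ℕ} {f g : Module.End ℂ V}

lemma of_le (hmono : Monotone W) (h : LieD W e f) (hde : d ≤ e) : LieD W d f :=
  fun k v hv => hmono (by omega) (h k v hv)

lemma zero : LieD W d (0 : Module.End ℂ V) := fun k v _ => by
  simp only [LinearMap.zero_apply]; exact Submodule.zero_mem _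

lemma add (hf : LieD W d f) (hg : LieD W d g) : LieD W d (f + g) := fun k v hv => by
  simpa using Submodule.add_mem _ (hf k v hv) (hg k v hv)

lemma neg (hf : LieD W d f) : LieD W d (-f) := fun k v hv => by
  simpa using Submodule.neg_mem _ (hf k v hv)

lemma sub (hf : LieD W d f) (hg : LieD W d g) : LieD W d (f - g) := by
  simpa [sub_eq_add_neg] using hf.add hg.neg

lemma smul (c : ℂ) (hf : LieD W d f) : LieD W d (c • f) := fun k v hv => by
  simpa using Submodule.smul_mem _ c (hf k v hv)

lemma mul (hf : LieD W d f) (hg : LieD W e g) : LieD W (d + e) (f * g) := fun k v hv => by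
  have := hf (k - e) (g v) (hg k v hv)
  rw [Module.End.mul_apply]
  convert this using 2
  push_cast; ring

lemma pow (hmono : Monotone W) (hf : LieD W 1 f) : ∀ n : ℕ, 1 ≤ n → LieD W n (f ^ n) := by
  intro n hn
  induction n with
  | zero => omega
  | succ m ih =>
    rcases Nat.eq_or_lt_of_le hn with h1 | h1
    · rw [← h1]; simpa using hf
    · have hm : 1 ≤ m := by omega
      have := hf.mul (ih hm)
      rwa [← pow_succ', Nat.add_comm] at this

lemma sum {ι : Type*} (s : Finset ι) (F : ι → Module.End ℂ V)
    (h : ∀ i ∈ s, LieD W d (F i)) : LieD W d (∑ i ∈ s, F i) := fun k v hv => by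
  rw [LinearMap.sum_apply]
  exact Submodule.sum_mem _ fun i hi => h i hi k v hv

lemma eq_zero {a t : ℤ} (hmono : Monotone W) (ha : W a = ⊥) (ht : W t = ⊤)
    (h : LieD W d f) (hd : t - d ≤ a) : f = 0 := by
  ext v
  have hv : v ∈ W t := by rw [ht]; trivial
  have := hmono hd (h t v hv)
  rw [ha] at this
  simpa using this

end LieD

lemma pow_finrank_succ_eq_zero [FiniteDimensional ℂ V] {f : Module.End ℂ V} {m : ℕ}
    (h : f ^ m = 0) : f ^ (Module.finrank ℂ V + 1) = 0 := by
  have h1 : LinearMap.ker (f ^ m) = ⊤ := by rw [h]; exact LinearMap.ker_zero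
  have h2 := Module.End.ker_pow_le_ker_pow_finrank f m
  rw [h1, top_le_iff, LinearMap.ker_eq_top] at h2
  rw [pow_succ, h2, zero_mul]

section ExpLie

variable [FiniteDimensional ℂ V] {W : ℤ → Submodule ℂ V}

lemma sum_split {A : Type*} [AddCommMonoid A] {N : ℕ} (hN : 1 ≤ N) (f : ℕ → A) :
    ∑ i ∈ Finset.range (N + 1), f i = f 0 + f 1 + ∑ i ∈ Finset.Ico 2 (N + 1), f i := by
  rw [Finset.range_eq_Ico, Finset.sum_eq_sum_Ico_succ_bot (by omega),
    Finset.sum_eq_sum_Ico_succ_bot (by omega)]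
  norm_num [add_assoc]

lemma expNil_term0 (α : Module.End ℂ V) :
    ((Nat.factorial 0 : ℂ))⁻¹ • α ^ 0 = 1 := by simp

lemma expNil_term1 (α : Module.End ℂ V) :
    ((Nat.factorial 1 : ℂ))⁻¹ • α ^ 1 = α := by simp

lemma LieD.expNil_sub_one_sub (hmono : Monotone W) {ν : Module.End ℂ V}
    (hν : LieD W 1 ν) (hN : 1 ≤ Module.finrank ℂ V) :
    LieD W 2 (expNil ν - 1 - ν) := by
  have h : expNil ν - 1 - ν
      = ∑ i ∈ Finset.Ico 2 (Module.finrank ℂ V + 1), ((i.factorial : ℂ))⁻¹ • ν ^ i := by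
    rw [expNil, sum_split hN, expNil_term0, expNil_term1]
    abel
  rw [h]
  refine LieD.sum _ _ fun i hi => ?_
  rw [Finset.mem_Ico] at hi
  exact LieD.smul _ ((hν.pow hmono i (by omega)).of_le hmono (by omega))

lemma LieD.pow_diff (hmono : Monotone W) {α δ : Module.End ℂ V} {e : ℕ}
    (hα : LieD W 1 α) (hδ : LieD W e δ) (he : 1 ≤ e) :
    ∀ n : ℕ, LieD W (e + n) ((α + δ) ^ (n + 1) - α ^ (n + 1)) := by
  intro n
  induction n with
  | zero => simpa using hδ
  | succ n ih =>
    have hαδ : LieD W 1 (α + δ) := hα.add (hδ.of_le hmono he)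
    have h1 : (α + δ) ^ (n + 1 + 1) - α ^ (n + 1 + 1)
        = (α + δ) * ((α + δ) ^ (n + 1) - α ^ (n + 1)) + δ * α ^ (n + 1) := by
      rw [pow_succ' (α + δ) (n + 1), pow_succ' α (n + 1)]
      noncomm_ring
    rw [h1]
    have h2 := hαδ.mul ih
    have h3 := hδ.mul (hα.pow hmono (n + 1) (by omega))
    have := h2.add (h3.of_le hmono (by omega))
    rwa [show 1 + (e + n) = e + (n + 1) by omega] at this

lemma LieD.expNil_diff (hmono : Monotone W) {α δ : Module.End ℂ V} {m : ℕ}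
    (hα : LieD W 1 α) (hδ : LieD W (m + 2) δ) (hN : 1 ≤ Module.finrank ℂ V) :
    LieD W (m + 3) (expNil (α + δ) - expNil α - δ) := by
  have h : expNil (α + δ) - expNil α - δ
      = ∑ i ∈ Finset.Ico 2 (Module.finrank ℂ V + 1),
          ((i.factorial : ℂ))⁻¹ • ((α + δ) ^ i - α ^ i) := by
    rw [expNil, expNil, ← Finset.sum_sub_distrib]
    simp_rw [← smul_sub]
    rw [sum_split hN (f := fun i => ((i.factorial : ℂ))⁻¹ • ((α + δ) ^ i - α ^ i))]
    simp only [pow_zero, pow_one, Nat.factorial_zero, Nat.factorial_one, Nat.cast_one, inv_one,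
      one_smul, sub_self, smul_zero, add_sub_cancel_left]
    abel
  rw [h]
  refine LieD.sum _ _ fun i hi => ?_
  rw [Finset.mem_Ico] at hi
  obtain ⟨hi2, _⟩ := hi
  have hp := LieD.pow_diff hmono hα hδ (by omega) (i - 1)
  rw [show i - 1 + 1 = i by omega] at hp
  exact (hp.of_le hmono (by omega)).smul _

end ExpLie

/-- eigenspaces of `Y` at integers up to `m` -/
def EB (Y : Module.End ℂ V) (m : ℤ) : Submodule ℂ V :=
  ⨆ j : ℤ, ⨆ _ : j ≤ m, Module.End.eigenspace Y (j : ℂ)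

lemma EB_mono {Y : Module.End ℂ V} {m m' : ℤ} (h : m ≤ m') : EB Y m ≤ EB Y m' :=
  iSup₂_le fun j hj => le_iSup₂_of_le j (hj.trans h) le_rfl

lemma EB_le {Y : Module.End ℂ V} {m : ℤ} {X : Submodule ℂ V}
    (h : ∀ j : ℤ, j ≤ m → Module.End.eigenspace Y (j : ℂ) ≤ X) : EB Y m ≤ X :=
  iSup₂_le h

lemma eig_le_EB {Y : Module.End ℂ V} {j m : ℤ} (h : j ≤ m) :
    Module.End.eigenspace Y (j : ℂ) ≤ EB Y m := le_iSup₂_of_le j h le_rfl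

lemma EB_le_iSup (Y : Module.End ℂ V) (m : ℤ) :
    EB Y m ≤ ⨆ j : ℤ, Module.End.eigenspace Y (j : ℂ) :=
  iSup₂_le fun j _ => le_iSup (fun j : ℤ => Module.End.eigenspace Y (j : ℂ)) j

section Grading

variable {W : ℤ → Submodule ℂ V} {a b : ℤ} {Y : Module.End ℂ V}

lemma IsGrading.eig_le (hY : IsGrading Y W) (j : ℤ) :
    Module.End.eigenspace Y (j : ℂ) ≤ W j := by
  rw [(hY j).1]; exact le_sup_left

lemma IsGrading.eig_eq_bot_of_le (hY : IsGrading Y W) (hmono : Monotone W) (ha : W a = ⊥)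
    {j : ℤ} (hj : j ≤ a) : Module.End.eigenspace Y (j : ℂ) = ⊥ :=
  le_bot_iff.mp (le_trans (hY.eig_le j) (ha ▸ hmono hj))

lemma IsGrading.eig_eq_bot_of_gt (hY : IsGrading Y W) (hmono : Monotone W) (hb : W b = ⊤)
    {j : ℤ} (hj : b < j) : Module.End.eigenspace Y (j : ℂ) = ⊥ := by
  have h1 : W (j - 1) = ⊤ := top_le_iff.mp (hb ▸ hmono (by omega))
  have h2 := (hY j).2
  rwa [h1, inf_top_eq] at h2

lemma IsGrading.W_le_EB (hY : IsGrading Y W) (hmono : Monotone W) (ha : W a = ⊥)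
    (m : ℤ) : W m ≤ EB Y m := by
  have key : ∀ n : ℕ, W (a + n) ≤ EB Y (a + n) := by
    intro n
    induction n with
    | zero =>
      simp only [Nat.cast_zero, add_zero, ha]
      exact bot_le
    | succ n ih =>
      have hcast : (a + ((n + 1 : ℕ) : ℤ)) = (a + n) + 1 := by push_cast; ring
      rw [hcast, (hY (a + n + 1)).1]
      apply sup_le
      · exact eig_le_EB le_rfl
      · have h2 : a + (n : ℤ) + 1 - 1 = a + (n : ℤ) := by ring
        rw [h2]
        exact ih.trans (EB_mono (by omega))
  by_cases hm : m ≤ a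
  · intro v hv
    have hb : v ∈ (⊥ : Submodule ℂ V) := ha ▸ hmono hm hv
    rw [Submodule.mem_bot] at hb
    rw [hb]; exact Submodule.zero_mem _
  · have hm' : m = a + ((m - a).toNat : ℤ) := by omega
    rw [hm']
    exact key _

lemma IsGrading.top_le_iSup (hY : IsGrading Y W) (hmono : Monotone W) (ha : W a = ⊥)
    (hb : W b = ⊤) : ⊤ ≤ ⨆ j : ℤ, Module.End.eigenspace Y (j : ℂ) := by
  have h1 : W (max a b) = ⊤ := top_le_iff.mp (hb ▸ hmono (le_max_right a b))
  rw [← h1]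
  exact (hY.W_le_EB hmono ha _).trans (EB_le_iSup Y _)

lemma aeval_eig (p : ℂ[X]) {μ : ℂ} {v : V} (hv : v ∈ Module.End.eigenspace Y μ) :
    Polynomial.aeval Y p v = p.eval μ • v := by
  rcases eq_or_ne v 0 with rfl | hne
  · simp
  · exact Module.End.aeval_apply_of_hasEigenvector ⟨hv, hne⟩

/-- helper: two endomorphisms agreeing on all integer eigenspaces of both?? no: agreeing on
all eigenspaces (for the fixed `Y`) are equal, provided the eigenspaces span. -/
lemma ext_of_eig {f g : Module.End ℂ V}
    (htope : ⊤ ≤ ⨆ j : ℤ, Module.End.eigenspace Y (j : ℂ))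
    (h : ∀ j : ℤ, ∀ v ∈ Module.End.eigenspace Y (j : ℂ), f v = g v) : f = g := by
  have hker : ⨆ j : ℤ, Module.End.eigenspace Y (j : ℂ) ≤ LinearMap.ker (f - g) := by
    refine iSup_le fun j v hv => ?_
    rw [LinearMap.mem_ker, LinearMap.sub_apply, sub_eq_zero]
    exact h j v hv
  ext v
  have : v ∈ LinearMap.ker (f - g) := hker (htope trivial)
  rw [LinearMap.mem_ker, LinearMap.sub_apply, sub_eq_zero] at this
  exact this

end Grading

section Proj

variable {W : ℤ → Submodule ℂ V} {Y : Module.End ℂ V} {s : Finset ℤ}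

noncomputable def Pj (Y : Module.End ℂ V) (s : Finset ℤ) (k : ℤ) : Module.End ℂ V :=
  Polynomial.aeval Y (Lagrange.basis s (fun j : ℤ => (j : ℂ)) k)

lemma cinj (s : Finset ℤ) : Set.InjOn (fun j : ℤ => (j : ℂ)) s :=
  fun x _ y _ h => Int.cast_injective h

lemma Pj_self {k : ℤ} (hk : k ∈ s) {v : V} (hv : v ∈ Module.End.eigenspace Y (k : ℂ)) :
    Pj Y s k v = v := by
  rw [Pj, aeval_eig _ hv, Lagrange.eval_basis_self (cinj s) hk, one_smul]

lemma Pj_ne {j k : ℤ} (hjk : j ≠ k) (hs : ∀ i : ℤ, i ∉ s → Module.End.eigenspace Y (i : ℂ) = ⊥)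
    {v : V} (hv : v ∈ Module.End.eigenspace Y (j : ℂ)) : Pj Y s k v = 0 := by
  by_cases hj : j ∈ s
  · rw [Pj, aeval_eig _ hv, Lagrange.eval_basis_of_ne (Ne.symm hjk) hj, zero_smul]
  · rw [hs j hj, Submodule.mem_bot] at hv
    rw [hv, map_zero]

lemma Pj_mem (htope : ⊤ ≤ ⨆ j : ℤ, Module.End.eigenspace Y (j : ℂ))
    (hs : ∀ i : ℤ, i ∉ s → Module.End.eigenspace Y (i : ℂ) = ⊥)
    {k : ℤ} (hk : k ∈ s) (v : V) : Pj Y s k v ∈ Module.End.eigenspace Y (k : ℂ) := by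
  have h : ⊤ ≤ Submodule.comap (Pj Y s k) (Module.End.eigenspace Y (k : ℂ)) := by
    refine htope.trans (iSup_le fun j v hv => ?_)
    rw [Submodule.mem_comap]
    by_cases hjk : j = k
    · subst hjk; rw [Pj_self hk hv]; exact hv
    · rw [Pj_ne hjk hs hv]; exact Submodule.zero_mem _
  exact h trivial

lemma Pj_sum (htope : ⊤ ≤ ⨆ j : ℤ, Module.End.eigenspace Y (j : ℂ))
    (hs : ∀ i : ℤ, i ∉ s → Module.End.eigenspace Y (i : ℂ) = ⊥) :
    ∑ k ∈ s, Pj Y s k = 1 := by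
  refine ext_of_eig htope fun j v hv => ?_
  rw [LinearMap.sum_apply, Module.End.one_apply]
  by_cases hj : j ∈ s
  · rw [Finset.sum_eq_single j (fun k hk hkj => Pj_ne (Ne.symm hkj) hs hv)
      (fun h => absurd hj h)]
    exact Pj_self hj hv
  · rw [hs j hj, Submodule.mem_bot] at hv
    subst hv
    simp

lemma Pj_ker {m k : ℤ} (hY : IsGrading Y W) (hmono : Monotone W) {a : ℤ} (ha : W a = ⊥)
    (hs : ∀ i : ℤ, i ∉ s → Module.End.eigenspace Y (i : ℂ) = ⊥)
    (hm : m < k) {v : V} (hv : v ∈ W m) : Pj Y s k v = 0 := by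
  have h : W m ≤ LinearMap.ker (Pj Y s k) := by
    refine (hY.W_le_EB hmono ha m).trans (iSup₂_le fun j hj w hw => ?_)
    rw [LinearMap.mem_ker]
    exact Pj_ne (by omega) hs hw
  simpa using h hv

end Proj

lemma exists_compl_step (W : ℤ → Submodule ℂ V) (hmono : Monotone W) (k : ℤ) :
    ∃ C : Submodule ℂ V, C ≤ W k ∧ C ⊓ W (k - 1) = ⊥ ∧ C ⊔ W (k - 1) = W k := by
  obtain ⟨q, hq⟩ := Submodule.exists_isCompl ((W (k - 1)).comap (W k).subtype)
  have hmap : Submodule.map (W k).subtype ((W (k - 1)).comap (W k).subtype)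
      = W (k - 1) := by
    rw [Submodule.map_comap_subtype]
    exact inf_eq_right.mpr (hmono (by omega))
  refine ⟨Submodule.map (W k).subtype q, Submodule.map_subtype_le _ _, ?_, ?_⟩
  · rw [← hmap, ← Submodule.map_inf _ (Submodule.injective_subtype _), inf_comm,
      hq.inf_eq_bot, Submodule.map_bot]
  · rw [← hmap, ← Submodule.map_sup, sup_comm, hq.sup_eq_top, Submodule.map_top,
      Submodule.range_subtype]

theorem exists_grading [FiniteDimensional ℂ V] (W : ℤ → Submodule ℂ V)
    (hmono : Monotone W) {a b : ℤ} (ha : W a = ⊥) (hb : W b = ⊤) :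
    ∃ Y : Module.End ℂ V, ∀ k : ℤ,
      W k = Module.End.eigenspace Y (k : ℂ) ⊔ W (k - 1) ∧
      Module.End.eigenspace Y (k : ℂ) ⊓ W (k - 1) = ⊥ := by
  classical
  choose C hC1 hC2 hC3 using exists_compl_step W hmono
  -- the tail sups
  set T : ℤ → Submodule ℂ V := fun m => (Finset.Icc (m + 1) b).sup C with hT
  have hS : ∀ m : ℤ, W m ⊓ T m = ⊥ := by
    have key : ∀ n : ℕ, ∀ m : ℤ, m = b - n → W m ⊓ T m = ⊥ := by
      intro n
      induction n with
      | zero =>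
        intro m hm
        have : Finset.Icc (m + 1) b = ∅ := Finset.Icc_eq_empty (by omega)
        rw [hT]; simp only [this, Finset.sup_empty]
        exact inf_bot_eq _
      | succ n ih =>
        intro m hm
        have hmb : m + 1 ≤ b := by omega
        have hsplit : Finset.Icc (m + 1) b = insert (m + 1) (Finset.Icc (m + 1 + 1) b) := by
          ext x; simp only [Finset.mem_Icc, Finset.mem_insert]; omega
        rw [eq_bot_iff]
        intro x hx
        rw [Submodule.mem_inf] at hx
        obtain ⟨hx1, hx2⟩ := hx
        rw [hT] at hx2
        simp only [hsplit, Finset.sup_insert] at hx2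
        obtain ⟨c, hc, t, ht, hct⟩ := Submodule.mem_sup.mp hx2
        have htW : t ∈ W (m + 1) := by
          have hxW : x ∈ W (m + 1) := hmono (by omega) hx1
          have hcW : c ∈ W (m + 1) := hC1 (m + 1) hc
          have : t = x - c := by rw [← hct]; abel
          rw [this]; exact Submodule.sub_mem _ hxW hcW
        have ht0 : t = 0 := by
          have := ih (m + 1) (by omega)
          have htmem : t ∈ W (m + 1) ⊓ T (m + 1) := Submodule.mem_inf.mpr ⟨htW, ht⟩
          rw [this] at htmem
          simpa using htmem
        have hxc : x = c := by rw [← hct, ht0, add_zero]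
        have : x ∈ C (m + 1) ⊓ W (m + 1 - 1) := by
          rw [Submodule.mem_inf]
          refine ⟨hxc ▸ hc, ?_⟩
          have : m + 1 - 1 = m := by ring
          rw [this]; exact hx1
        rw [hC2] at this
        simpa using this
    intro m
    by_cases hmb : m ≤ b
    · exact key (b - m).toNat m (by omega)
    · have : Finset.Icc (m + 1) b = ∅ := Finset.Icc_eq_empty (by omega)
      rw [hT]; simp only [this, Finset.sup_empty]
      exact inf_bot_eq _
  have hClow : ∀ k : ℤ, k ≤ a → C k = ⊥ := fun k hk =>
    le_bot_iff.mp ((hC1 k).trans (ha ▸ hmono hk))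
  have hChigh : ∀ k : ℤ, b < k → C k = ⊥ := by
    intro k hk
    have h1 : W (k - 1) = ⊤ := top_le_iff.mp (hb ▸ hmono (by omega))
    have := hC2 k
    rwa [h1, inf_top_eq] at this
  -- independence
  have hind : iSupIndep C := by
    intro k
    have hle : (⨆ (j : ℤ) (_ : j ≠ k), C j) ≤ W (k - 1) ⊔ T k := by
      refine iSup_le fun j => iSup_le fun hjk => ?_
      rcases lt_or_gt_of_ne hjk with h | h
      · exact le_sup_of_le_left ((hC1 j).trans (hmono (by omega)))
      · by_cases hjb : j ≤ b
        · exact le_sup_of_le_right (Finset.le_sup (Finset.mem_Icc.mpr ⟨by omega, hjb⟩))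
        · rw [hChigh j (by omega)]; exact bot_le
    rw [disjoint_iff]
    rw [eq_bot_iff]
    intro x hx
    rw [Submodule.mem_inf] at hx
    obtain ⟨hx1, hx2⟩ := hx
    obtain ⟨w, hw, t, ht, hwt⟩ := Submodule.mem_sup.mp (hle hx2)
    have htW : t ∈ W k := by
      have hxW : x ∈ W k := hC1 k hx1
      have hwW : w ∈ W k := hmono (by omega) hw
      have : t = x - w := by rw [← hwt]; abel
      rw [this]; exact Submodule.sub_mem _ hxW hwW
    have ht0 : t = 0 := by
      have htmem : t ∈ W k ⊓ T k := Submodule.mem_inf.mpr ⟨htW, ht⟩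
      rw [hS k] at htmem
      simpa using htmem
    have hxw : x = w := by rw [← hwt, ht0, add_zero]
    have : x ∈ C k ⊓ W (k - 1) := Submodule.mem_inf.mpr ⟨hx1, hxw ▸ hw⟩
    rw [hC2] at this
    simpa using this
  -- spanning
  have hsup : (⨆ j : ℤ, C j) = ⊤ := by
    refine le_antisymm le_top ?_
    have key : ∀ n : ℕ, W (a + n) ≤ ⨆ j : ℤ, C j := by
      intro n
      induction n with
      | zero =>
        simp only [Nat.cast_zero, add_zero, ha]
        exact bot_le
      | succ n ih =>
        have hcast : (a + ((n + 1 : ℕ) : ℤ)) = (a + n) + 1 := by push_cast; ring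
        rw [hcast, ← hC3 (a + n + 1)]
        apply sup_le
        · exact le_iSup C (a + (n : ℤ) + 1)
        · have h2 : a + (n : ℤ) + 1 - 1 = a + (n : ℤ) := by ring
          rw [h2]; exact ih
    have h1 : W (max a b) = ⊤ := top_le_iff.mp (hb ▸ hmono (le_max_right a b))
    rw [← h1]
    have : max a b = a + ((max a b - a).toNat : ℤ) := by omega
    rw [this]
    exact key _
  have hI : DirectSum.IsInternal C :=
    DirectSum.isInternal_submodule_of_iSupIndep_of_iSup_eq_top hind hsup
  set e := LinearEquiv.ofBijective (DirectSum.coeLinearMap C) hI with he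
  set D : Module.End ℂ (DirectSum ℤ (fun j => C j)) :=
    DirectSum.toModule ℂ ℤ (DirectSum ℤ (fun j => C j))
      (fun k => (DirectSum.lof ℂ ℤ (fun j => C j) k) ∘ₗ ((k : ℂ) • LinearMap.id)) with hD
  set Y : Module.End ℂ V := e.toLinearMap ∘ₗ D ∘ₗ e.symm.toLinearMap with hY
  have hYC : ∀ (k : ℤ) (x : V) (hx : x ∈ C k), Y x = (k : ℂ) • x := by
    intro k x hx
    have h1 : e (DirectSum.lof ℂ ℤ (fun j => C j) k ⟨x, hx⟩) = x := by
      rw [he]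
      show DirectSum.coeLinearMap C (DirectSum.lof ℂ ℤ (fun j => C j) k ⟨x, hx⟩) = x
      rw [DirectSum.lof_eq_of, DirectSum.coeLinearMap_of]
    have h2 : e.symm x = DirectSum.lof ℂ ℤ (fun j => C j) k ⟨x, hx⟩ :=
      e.symm_apply_eq.mpr h1.symm
    have h3 : D (DirectSum.lof ℂ ℤ (fun j => C j) k ⟨x, hx⟩)
        = DirectSum.lof ℂ ℤ (fun j => C j) k ((k : ℂ) • ⟨x, hx⟩) := by
      rw [hD, DirectSum.toModule_lof]
      rfl
    rw [hY]
    simp only [LinearMap.comp_apply, LinearEquiv.coe_toLinearMap]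
    rw [h2, h3]
    have h4 : e (DirectSum.lof ℂ ℤ (fun j => C j) k ((k : ℂ) • ⟨x, hx⟩)) =
        (((k : ℂ) • (⟨x, hx⟩ : C k) : C k) : V) := by
      rw [he]
      show DirectSum.coeLinearMap C _ = _
      rw [DirectSum.lof_eq_of, DirectSum.coeLinearMap_of]
    rw [h4]
    rfl
  have hCle : ∀ k : ℤ, C k ≤ Module.End.eigenspace Y (k : ℂ) := by
    intro k x hx
    rw [Module.End.mem_eigenspace_iff]
    exact hYC k x hx
  have heig : ∀ k : ℤ, Module.End.eigenspace Y (k : ℂ) = C k := by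
    have hindE : iSupIndep (fun j : ℤ => Module.End.eigenspace Y (j : ℂ)) :=
      (Module.End.eigenspaces_iSupIndep Y).comp Int.cast_injective
    intro k
    refine le_antisymm ?_ (hCle k)
    have hsplit : (⊤ : Submodule ℂ V) ≤ C k ⊔ ⨆ (j : ℤ) (_ : j ≠ k), C j := by
      rw [← hsup]
      refine iSup_le fun j => ?_
      by_cases hjk : j = k
      · subst hjk; exact le_sup_left
      · exact le_sup_of_le_right (le_iSup₂_of_le j hjk le_rfl)
    have step1 : Module.End.eigenspace Y (k : ℂ)
        ≤ (C k ⊔ ⨆ (j : ℤ) (_ : j ≠ k), C j) ⊓ Module.End.eigenspace Y (k : ℂ) := by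
      rw [le_inf_iff]
      exact ⟨le_trans le_top hsplit, le_rfl⟩
    refine step1.trans ?_
    rw [sup_inf_assoc_of_le _ (hCle k)]
    have step2 : (⨆ (j : ℤ) (_ : j ≠ k), C j) ⊓ Module.End.eigenspace Y (k : ℂ)
        ≤ ⊥ := by
      have hle2 : (⨆ (j : ℤ) (_ : j ≠ k), C j)
          ≤ ⨆ (j : ℤ) (_ : j ≠ k), Module.End.eigenspace Y (j : ℂ) :=
        iSup₂_le fun j hj => le_iSup₂_of_le j hj (hCle j)
      have := (hindE k).symm
      rw [disjoint_iff] at this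
      calc (⨆ (j : ℤ) (_ : j ≠ k), C j) ⊓ Module.End.eigenspace Y (k : ℂ)
          ≤ (⨆ (j : ℤ) (_ : j ≠ k), Module.End.eigenspace Y (j : ℂ))
            ⊓ Module.End.eigenspace Y (k : ℂ) := inf_le_inf_right _ hle2
        _ = ⊥ := this
    calc C k ⊔ (⨆ (j : ℤ) (_ : j ≠ k), C j) ⊓ Module.End.eigenspace Y (k : ℂ)
        ≤ C k ⊔ ⊥ := sup_le_sup_left step2 _
      _ = C k := sup_bot_eq _
  exact ⟨Y, fun k => by rw [heig k]; exact ⟨(hC3 k).symm, hC2 k⟩⟩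


/-- The set of gradings of a finite increasing filtration `W` of a finite-dimensional
vector space is nonempty, and the nilpotent group `exp(Lie₋₁)`,
where `Lie₋₁ = {α | α (W k) ⊆ W (k-1) for all k}`, acts transitively on it
(by conjugation). -/
theorem gradings_nonempty_and_transitive
    [FiniteDimensional ℂ V] (W : ℤ → Submodule ℂ V)
    (hmono : Monotone W) (hbot : ∃ a : ℤ, W a = ⊥) (htop : ∃ b : ℤ, W b = ⊤) :
    (∃ Y : Module.End ℂ V, IsGrading Y W) ∧
    ∀ Y₁ Y₂ : Module.End ℂ V, IsGrading Y₁ W → IsGrading Y₂ W →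
      ∃ α : Module.End ℂ V, (∀ k : ℤ, (W k).map α ≤ W (k - 1)) ∧
        Y₂ = expNil α * Y₁ * expNil (-α) := by
  classical
  obtain ⟨a, ha⟩ := hbot
  obtain ⟨b, hb⟩ := htop
  refine ⟨?_, ?_⟩
  · obtain ⟨Y, hY⟩ := exists_grading W hmono ha hb
    exact ⟨Y, hY⟩
  · intro Y₁ Y₂ hY₁ hY₂
    by_cases hV : Subsingleton V
    · have hall : ∀ (p q : Submodule ℂ V), p ≤ q := fun p q v hv => by
        rw [Subsingleton.elim v 0]; exact q.zero_mem
      refine ⟨0, fun k => hall _ _, ?_⟩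
      apply LinearMap.ext; intro v; apply Subsingleton.elim
    · have hnt : Nontrivial V := not_subsingleton_iff_nontrivial.mp hV
      have hab : a < b := by
        by_contra hba
        push_neg at hba
        apply hV
        have hbt : (⊤ : Submodule ℂ V) = ⊥ :=
          le_antisymm (by rw [← ha, ← hb]; exact hmono hba) bot_le
        constructor
        intro x y
        have hx : x ∈ (⊥ : Submodule ℂ V) := hbt ▸ Submodule.mem_top
        have hy : y ∈ (⊥ : Submodule ℂ V) := hbt ▸ Submodule.mem_top
        rw [Submodule.mem_bot] at hx hy
        rw [hx, hy]
      have hN : 1 ≤ Module.finrank ℂ V := Module.finrank_pos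
      set s : Finset ℤ := Finset.Icc (a + 1) b with hsdef
      have hsmem : ∀ i : ℤ, i ∉ s → i ≤ a ∨ b < i := by
        intro i hi
        rw [hsdef, Finset.mem_Icc] at hi
        push_neg at hi
        omega
      have hs1 : ∀ i : ℤ, i ∉ s → Module.End.eigenspace Y₁ (i : ℂ) = ⊥ := by
        intro i hi
        rcases hsmem i hi with h | h
        · exact hY₁.eig_eq_bot_of_le hmono ha h
        · exact hY₁.eig_eq_bot_of_gt hmono hb h
      have hs2 : ∀ i : ℤ, i ∉ s → Module.End.eigenspace Y₂ (i : ℂ) = ⊥ := by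
        intro i hi
        rcases hsmem i hi with h | h
        · exact hY₂.eig_eq_bot_of_le hmono ha h
        · exact hY₂.eig_eq_bot_of_gt hmono hb h
      have htope₁ := hY₁.top_le_iSup hmono ha hb
      have htope₂ := hY₂.top_le_iSup hmono ha hb
      set g : Module.End ℂ V := ∑ k ∈ s, (Pj Y₂ s k) * (Pj Y₁ s k) with hgdef
      have hgv : ∀ j : ℤ, j ∈ s → ∀ v ∈ Module.End.eigenspace Y₁ (j : ℂ),
          g v = Pj Y₂ s j v := by
        intro j hj v hv
        rw [hgdef, LinearMap.sum_apply, Finset.sum_eq_single j]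
        · rw [Module.End.mul_apply, Pj_self hj hv]
        · intro k hk hkj
          rw [Module.End.mul_apply, Pj_ne (Ne.symm hkj) hs1 hv, map_zero]
        · intro hj'; exact absurd hj hj'
      have hcomm : g * Y₁ = Y₂ * g := by
        refine ext_of_eig htope₁ fun j v hv => ?_
        by_cases hj : j ∈ s
        · have hYv : Y₁ v = (j : ℂ) • v := Module.End.mem_eigenspace_iff.mp hv
          have hgmem : g v ∈ Module.End.eigenspace Y₂ (j : ℂ) := by
            rw [hgv j hj v hv]; exact Pj_mem htope₂ hs2 hj v
          rw [Module.End.mul_apply, Module.End.mul_apply, hYv, map_smul,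
            Module.End.mem_eigenspace_iff.mp hgmem]
        · rw [hs1 j hj, Submodule.mem_bot] at hv
          rw [hv]; simp
      have hν : LieD W 1 (g - 1) := by
        intro k v hv
        have hsub : EB Y₁ k ≤ Submodule.comap (g - 1) (W (k - 1)) := by
          refine EB_le fun j hj => ?_
          intro w hw
          rw [Submodule.mem_comap, LinearMap.sub_apply, Module.End.one_apply]
          by_cases hjs : j ∈ s
          · rw [hgv j hjs w hw]
            have hwj : w ∈ W j := hY₁.eig_le j hw
            have hsplit : Pj Y₂ s j w + ∑ k' ∈ s.erase j, Pj Y₂ s k' w = w := by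
              rw [Finset.add_sum_erase _ (fun k' => Pj Y₂ s k' w) hjs,
                ← LinearMap.sum_apply, Pj_sum htope₂ hs2]
              rfl
            have hA : Pj Y₂ s j w = w - ∑ k' ∈ s.erase j, Pj Y₂ s k' w :=
              eq_sub_of_add_eq hsplit
            have heq : Pj Y₂ s j w - w = -(∑ k' ∈ s.erase j, Pj Y₂ s k' w) := by
              rw [hA]; abel
            rw [heq]
            refine Submodule.neg_mem _ (Submodule.sum_mem _ fun k' hk' => ?_)
            rw [Finset.mem_erase] at hk'
            obtain ⟨hk'j, hk's⟩ := hk'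
            rcases lt_or_gt_of_ne hk'j with hlt | hgt
            · have hm : Pj Y₂ s k' w ∈ Module.End.eigenspace Y₂ (k' : ℂ) :=
                Pj_mem htope₂ hs2 hk's w
              have hmem : Pj Y₂ s k' w ∈ W k' := hY₂.eig_le k' hm
              exact hmono (by omega) hmem
            · rw [Pj_ker hY₂ hmono ha hs2 hgt hwj]
              exact Submodule.zero_mem _
          · rw [hs1 j hjs, Submodule.mem_bot] at hw
            rw [hw]
            simp
        have hmem := hsub ((hY₁.W_le_EB hmono ha k) hv)
        rw [Submodule.mem_comap] at hmem
        simpa using hmem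
      set n₀ : ℕ := (b - a).toNat with hn₀def
      have hn₀ : 1 ≤ n₀ := by omega
      have htop' : W (a + n₀) = ⊤ := by
        have h : a + (n₀ : ℤ) = b := by omega
        rw [h, hb]
      set F : ℕ → Module.End ℂ V := fun m =>
        Nat.rec (motive := fun _ => Module.End ℂ V) (g - 1)
          (fun _ p => p + (g - expNil p)) m with hF
      have hinv : ∀ m : ℕ, LieD W 1 (F m) ∧ LieD W (m + 2) (g - expNil (F m)) := by
        intro m
        induction m with
        | zero =>
          refine ⟨hν, ?_⟩
          have h1 : g - expNil (g - 1) = -(expNil (g - 1) - 1 - (g - 1)) := by abel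
          rw [show F 0 = g - 1 from rfl, h1]
          exact (LieD.expNil_sub_one_sub hmono hν hN).neg
        | succ m ih =>
          obtain ⟨ih1, ih2⟩ := ih
          have hFs : F (m + 1) = F m + (g - expNil (F m)) := rfl
          constructor
          · rw [hFs]
            exact ih1.add (ih2.of_le hmono (by omega))
          · have hdiff := LieD.expNil_diff hmono ih1 ih2 hN
            have heq : g - expNil (F (m + 1))
                = -(expNil (F m + (g - expNil (F m))) - expNil (F m) - (g - expNil (F m))) := by
              rw [hFs]; abel
            rw [heq]
            exact (hdiff.of_le hmono (by omega)).neg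
      set α := F n₀ with hαdef
      have hα1 : LieD W 1 α := (hinv n₀).1
      have hgE : g = expNil α := by
        have h0 : g - expNil α = 0 := by
          refine LieD.eq_zero hmono ha htop' (hinv n₀).2 ?_
          push_cast; omega
        rwa [sub_eq_zero] at h0
      have hαn : α ^ n₀ = 0 := by
        refine LieD.eq_zero hmono ha htop' (hα1.pow hmono n₀ hn₀) ?_
        push_cast; omega
      have hαN : α ^ (Module.finrank ℂ V + 1) = 0 := pow_finrank_succ_eq_zero hαn
      have hprod : expNil α * expNil (-α) = 1 := expNil_mul_expNil_neg α hαN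
      refine ⟨α, ?_, ?_⟩
      · intro k
        rw [Submodule.map_le_iff_le_comap]
        intro v hv
        rw [Submodule.mem_comap]
        simpa using hα1 k v hv
      · calc Y₂ = Y₂ * (expNil α * expNil (-α)) := by rw [hprod, mul_one]
          _ = (Y₂ * g) * expNil (-α) := by rw [hgE, mul_assoc]
          _ = (g * Y₁) * expNil (-α) := by rw [hcomm]
          _ = expNil α * Y₁ * expNil (-α) := by rw [hgE]
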